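/- arXiv:1207.3128 — 11 statements merged into one kernel-verified Lean document; each statement's English description precedes it below -/
import Mathlib

section
/- For all y with 0 ≤ y < π/2, one has Z₁(y) := (2·(y/sin y)^2 − 1)^2 − (y/sin²y − cot y)^2 ≥ 1, where at y = 0 the expressions are interpreted by their limits (so Z₁(0) = 1). -/
open Real

lemma key_bound (y : ℝ) (hy : 0 < y) (h1 : y < π / 2) :
    y ^ 2 * (Real.sin y) ^ 2 ≤ 4 * (y ^ 2 - (Real.sin y) ^ 2) := by
  have hpi : π < 3.15 := Real.pi_lt_d2
  set t := y / 2 with ht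
  have ht0 : 0 < t := by positivity
  have ht1 : t < 0.79 := by
    rw [ht]; nlinarith
  have ht1' : t ≤ 1 := by nlinarith
  have hst : t - t ^ 3 / 4 < Real.sin t := by
    have := Real.sin_gt_sub_cube ht0; nlinarith [pow_pos ht0 3]
  have hst' : Real.sin t < t := Real.sin_lt ht0
  have hpyth : Real.sin t ^ 2 + Real.cos t ^ 2 = 1 := Real.sin_sq_add_cos_sq t
  have hsy : Real.sin y = 2 * Real.sin t * Real.cos t := by
    rw [show y = 2 * t by rw [ht]; ring, Real.sin_two_mul]
  have hyt : y = 2 * t := by rw [ht]; ring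
  rw [hsy, hyt]
  have ht2 : t ^ 2 ≤ 1 := by nlinarith
  have ht2' : t ^ 2 ≤ 0.6241 := by nlinarith
  have hu0 : 0 < t - t ^ 3 / 4 := by nlinarith
  have hu2 : Real.sin t ^ 2 ≤ t ^ 2 := by nlinarith
  have hl : (t - t ^ 3 / 4) ^ 2 ≤ Real.sin t ^ 2 := by nlinarith
  have h2 : (1 + t ^ 2) * (1 - Real.sin t ^ 2) ≤ 1 := by nlinarith [sq_nonneg t, sq_nonneg (t^2)]
  have h2' : 0 ≤ (1 + t ^ 2) * (1 - Real.sin t ^ 2) := by nlinarith [sq_nonneg (Real.cos t)]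
  have h3 : Real.sin t ^ 2 * ((1 + t ^ 2) * (1 - Real.sin t ^ 2)) ≤ t ^ 2 * 1 :=
    mul_le_mul hu2 h2 h2' (sq_nonneg t)
  nlinarith [h3, hpyth, sq_nonneg (Real.sin t * Real.cos t)]

theorem Z1_ge_one (y : ℝ) (h0 : 0 ≤ y) (h1 : y < π / 2) :
    (if y = 0 then (1 : ℝ) else
      (2 * (y / Real.sin y) ^ 2 - 1) ^ 2 -
        (y / (Real.sin y) ^ 2 - Real.cos y / Real.sin y) ^ 2) ≥ 1 := by
  rcases eq_or_lt_of_le h0 with h | hy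
  · simp [← h]
  · rw [if_neg (ne_of_gt hy)]
    have hpi : π < 3.15 := Real.pi_lt_d2
    have hs : 0 < Real.sin y := Real.sin_pos_of_pos_of_lt_pi hy (by nlinarith)
    have hc : 0 < Real.cos y := Real.cos_pos_of_mem_Ioo ⟨by linarith, h1⟩
    have hsy : Real.sin y < y := Real.sin_lt hy
    have htan : y * Real.cos y < Real.sin y := by
      have := Real.lt_tan hy h1
      rw [Real.tan_eq_sin_div_cos] at this
      calc y * Real.cos y < (Real.sin y / Real.cos y) * Real.cos y := by
            exact mul_lt_mul_of_pos_right this hc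
        _ = Real.sin y := by field_simp
    have hc1 : Real.cos y ≤ 1 := Real.cos_le_one y
    have hkey := key_bound y hy h1
    -- 0 ≤ y - sin y * cos y ≤ y * sin y ^ 2
    have hA : 0 ≤ y - Real.sin y * Real.cos y := by nlinarith
    have hB : y - Real.sin y * Real.cos y ≤ y * Real.sin y ^ 2 := by
      have hpyth : Real.sin y ^ 2 + Real.cos y ^ 2 = 1 := Real.sin_sq_add_cos_sq y
      nlinarith [mul_lt_mul_of_pos_right htan hc]
    have heq : (2 * (y / Real.sin y) ^ 2 - 1) ^ 2 -
        (y / (Real.sin y) ^ 2 - Real.cos y / Real.sin y) ^ 2 =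
        ((2 * y ^ 2 - Real.sin y ^ 2) ^ 2 - (y - Real.sin y * Real.cos y) ^ 2)
          / (Real.sin y) ^ 4 := by
      field_simp
    rw [heq, ge_iff_le, le_div_iff₀ (by positivity)]
    nlinarith [sq_nonneg (y - Real.sin y * Real.cos y), sq_nonneg (y * Real.sin y),
      mul_le_mul hB hB hA (by positivity), sq_nonneg (Real.sin y),
      mul_le_mul_of_nonneg_left hkey (sq_nonneg y), sq_nonneg (y ^ 2 - Real.sin y ^ 2),
      mul_pos hs hs, mul_pos hy hy, mul_le_mul hsy.le hsy.le hs.le hy.le]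
end

section
/- For all y with 0 ≤ y < π/4, one has Z₂(y) := (2·(y/cos y)^2 + 1)^2 − (y/cos²y + tan y)^2 ≥ 1. -/
open Real

theorem Z2_ge_one (y : ℝ) (h0 : 0 ≤ y) (h1 : y < π / 4) :
    (2 * (y / Real.cos y) ^ 2 + 1) ^ 2 -
      (y / (Real.cos y) ^ 2 + Real.tan y) ^ 2 ≥ 1 := by
  have hpi : (0:ℝ) < π := Real.pi_pos
  have hc : 0 < Real.cos y := by
    apply Real.cos_pos_of_mem_Ioo
    constructor
    · linarith
    · nlinarith
  have hs : Real.sin y ≤ y := Real.sin_le h0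
  have hs0 : 0 ≤ Real.sin y := Real.sin_nonneg_of_nonneg_of_le_pi h0 (by nlinarith)
  have hc1 : Real.cos y ≤ 1 := Real.cos_le_one y
  have hcos : 1 - y ^ 2 / 2 ≤ Real.cos y := by
    have := Real.one_sub_sq_div_two_le_cos (x := y)
    linarith
  have key : 4 * y ^ 4 + 4 * y ^ 2 * (Real.cos y) ^ 2
      - (y + Real.sin y * Real.cos y) ^ 2 ≥ 0 := by
    have hsc : Real.sin y * Real.cos y ≤ y * Real.cos y :=
      mul_le_mul_of_nonneg_right hs hc.le
    have h2 : (y + Real.sin y * Real.cos y) ^ 2 ≤ (y * (1 + Real.cos y)) ^ 2 := by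
      have h3 : 0 ≤ y + Real.sin y * Real.cos y := by positivity
      have h4 : y + Real.sin y * Real.cos y ≤ y * (1 + Real.cos y) := by nlinarith
      nlinarith
    have h5 : (1 - Real.cos y) * (1 + 3 * Real.cos y) ≤ (y ^ 2 / 2) * 4 := by
      have h6 : 0 ≤ 1 - Real.cos y := by linarith
      have h7 : 1 - Real.cos y ≤ y ^ 2 / 2 := by linarith
      nlinarith
    nlinarith [sq_nonneg y, sq_nonneg y, mul_le_mul_of_nonneg_left h5 (sq_nonneg y)]
  rw [Real.tan_eq_sin_div_cos]
  rw [ge_iff_le, ← sub_nonneg]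
  have hc4 : (0:ℝ) < (Real.cos y) ^ 4 := by positivity
  have heq : (2 * (y / Real.cos y) ^ 2 + 1) ^ 2 -
      (y / (Real.cos y) ^ 2 + Real.sin y / Real.cos y) ^ 2 - 1
      = (4 * y ^ 4 + 4 * y ^ 2 * (Real.cos y) ^ 2
        - (y + Real.sin y * Real.cos y) ^ 2) / (Real.cos y) ^ 4 := by
    field_simp
    ring
  rw [heq]
  positivity
end

section
/- The function T(ω) = ω² + (ω/2)·sin(2ω) − 2·sin²(ω) is strictly positive for all ω with 0 < ω < π. -/
open Real

private noncomputable def Tf (x : ℝ) : ℝ := x ^ 2 + (x / 2) * Real.sin (2 * x) - 2 * (Real.sin x) ^ 2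
private noncomputable def Tg (x : ℝ) : ℝ := 2 * x - (3/2) * Real.sin (2 * x) + x * Real.cos (2 * x)
private noncomputable def Th (x : ℝ) : ℝ := 2 - 2 * Real.cos (2 * x) - 2 * x * Real.sin (2 * x)

private lemma hasDerivAt_Tf (x : ℝ) : HasDerivAt Tf (Tg x) x := by
  have hsin2 : HasDerivAt (fun y : ℝ => Real.sin (2 * y)) (2 * Real.cos (2 * x)) x := by
    simpa [mul_comm] using ((hasDerivAt_id x).const_mul 2).sin
  have h1 : HasDerivAt (fun y : ℝ => y ^ 2) (2 * x) x := by
    simpa using hasDerivAt_pow 2 x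
  have h2 : HasDerivAt (fun y : ℝ => (y / 2) * Real.sin (2 * y))
      ((1/2) * Real.sin (2 * x) + (x / 2) * (2 * Real.cos (2 * x))) x := by
    have hd : HasDerivAt (fun y : ℝ => y / 2) (1/2) x := by
      simpa using (hasDerivAt_id x).div_const 2
    exact hd.mul hsin2
  have h3 : HasDerivAt (fun y : ℝ => 2 * (Real.sin y) ^ 2)
      (2 * (2 * Real.sin x * Real.cos x)) x := by
    have := ((Real.hasDerivAt_sin x).pow 2).const_mul 2
    simpa [mul_comm, mul_assoc, mul_left_comm] using this
  have := (h1.add h2).sub h3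
  refine this.congr_deriv ?_
  unfold Tg
  rw [Real.sin_two_mul]
  ring

private lemma hasDerivAt_Tg (x : ℝ) : HasDerivAt Tg (Th x) x := by
  have hsin2 : HasDerivAt (fun y : ℝ => Real.sin (2 * y)) (2 * Real.cos (2 * x)) x := by
    simpa [mul_comm] using ((hasDerivAt_id x).const_mul 2).sin
  have hcos2 : HasDerivAt (fun y : ℝ => Real.cos (2 * y)) (-(2 * Real.sin (2 * x))) x := by
    simpa [mul_comm] using ((hasDerivAt_id x).const_mul 2).cos
  have h1 : HasDerivAt (fun y : ℝ => 2 * y) 2 x := by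
    simpa using (hasDerivAt_id x).const_mul 2
  have h2 := hsin2.const_mul (3/2 : ℝ)
  have h3 := (hasDerivAt_id x).mul hcos2
  have := (h1.sub h2).add h3
  refine this.congr_deriv ?_
  unfold Th
  simp only [id_eq]
  ring

private lemma Th_pos {x : ℝ} (h1 : 0 < x) (h2 : x < π) : 0 < Th x := by
  have hs : 0 < Real.sin x := Real.sin_pos_of_pos_of_lt_pi h1 h2
  have key : 0 < Real.sin x - x * Real.cos x := by
    rcases le_or_gt (Real.cos x) 0 with hc | hc
    · nlinarith
    · have hx2 : x < π / 2 := by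
        by_contra h
        push_neg at h
        have := Real.cos_nonpos_of_pi_div_two_le_of_le h (by linarith [Real.pi_pos])
        linarith
      have ht := Real.lt_tan h1 hx2
      rw [Real.tan_eq_sin_div_cos] at ht
      have := (lt_div_iff₀ hc).mp ht
      linarith
  have e : Th x = 4 * Real.sin x * (Real.sin x - x * Real.cos x) := by
    unfold Th
    rw [Real.sin_two_mul, Real.cos_two_mul']
    linear_combination -2 * Real.sin_sq_add_cos_sq x
  rw [e]
  positivity

private lemma Tg_pos {x : ℝ} (h1 : 0 < x) (h2 : x < π) : 0 < Tg x := by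
  have hmono : StrictMonoOn Tg (Set.Icc 0 π) := by
    apply strictMonoOn_of_deriv_pos (convex_Icc 0 π)
    · exact fun y _ => (hasDerivAt_Tg y).continuousAt.continuousWithinAt
    · intro y hy
      rw [interior_Icc] at hy
      rw [(hasDerivAt_Tg y).deriv]
      exact Th_pos hy.1 hy.2
  have h0 : Tg 0 = 0 := by simp [Tg]
  have := hmono (Set.mem_Icc.mpr ⟨le_refl 0, Real.pi_pos.le⟩)
    (Set.mem_Icc.mpr ⟨h1.le, h2.le⟩) h1
  rwa [h0] at this

theorem T_pos (ω : ℝ) (h1 : 0 < ω) (h2 : ω < π) :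
    ω ^ 2 + (ω / 2) * Real.sin (2 * ω) - 2 * (Real.sin ω) ^ 2 > 0 := by
  have hmono : StrictMonoOn Tf (Set.Icc 0 π) := by
    apply strictMonoOn_of_deriv_pos (convex_Icc 0 π)
    · exact fun y _ => (hasDerivAt_Tf y).continuousAt.continuousWithinAt
    · intro y hy
      rw [interior_Icc] at hy
      rw [(hasDerivAt_Tf y).deriv]
      exact Tg_pos hy.1 hy.2
  have h0 : Tf 0 = 0 := by simp [Tf]
  have := hmono (Set.mem_Icc.mpr ⟨le_refl 0, Real.pi_pos.le⟩)
    (Set.mem_Icc.mpr ⟨h1.le, h2.le⟩) h1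
  rw [h0] at this
  exact this
end

section
/- Define Ξ(ω) = (2ω − sin(2ω)) / (2·ω²·sin(ω)) for 0 < ω < π. Then Ξ(ω) ≥ 2/π for all ω in (0, π), with equality at ω = π/2 (i.e., the infimum of Ξ over (0, π) equals 2/π and is attained at π/2). -/
open Real Set

noncomputable def Tfun (x : ℝ) : ℝ := x^2 + x * Real.sin x * Real.cos x - 2 * (Real.sin x)^2
noncomputable def Tfun' (x : ℝ) : ℝ :=
  2*x - 3*(Real.sin x * Real.cos x) + x*((Real.cos x)^2 - (Real.sin x)^2)

lemma hasDerivAt_Tfun (x : ℝ) : HasDerivAt Tfun (Tfun' x) x := by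
  have h1 : HasDerivAt (fun x : ℝ => x^2) (2*x) x := by
    simpa using (hasDerivAt_pow 2 x)
  have h2 : HasDerivAt (fun x : ℝ => x * Real.sin x * Real.cos x)
      ((1 * Real.sin x + x * Real.cos x) * Real.cos x + (x * Real.sin x) * (-Real.sin x)) x :=
    (((hasDerivAt_id x).mul (Real.hasDerivAt_sin x)).mul (Real.hasDerivAt_cos x))
  have h3 : HasDerivAt (fun x : ℝ => 2 * (Real.sin x)^2)
      (2 * (2 * Real.sin x ^ 1 * Real.cos x)) x :=
    (((Real.hasDerivAt_sin x).pow 2).const_mul 2)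
  have := (h1.add h2).sub h3
  refine this.congr_deriv ?_
  simp [Tfun']; ring

lemma hasDerivAt_Tfun' (x : ℝ) :
    HasDerivAt Tfun' (4 * Real.sin x * (Real.sin x - x * Real.cos x)) x := by
  have h1 : HasDerivAt (fun x : ℝ => 2*x) 2 x := by simpa using (hasDerivAt_id x).const_mul 2
  have h2 : HasDerivAt (fun x : ℝ => 3*(Real.sin x * Real.cos x))
      (3 * (Real.cos x * Real.cos x + Real.sin x * (-Real.sin x))) x :=
    (((Real.hasDerivAt_sin x).mul (Real.hasDerivAt_cos x)).const_mul 3)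
  have h3 : HasDerivAt (fun x : ℝ => x*((Real.cos x)^2 - (Real.sin x)^2))
      (1 * ((Real.cos x)^2 - (Real.sin x)^2) +
        x * ((2 * Real.cos x ^ 1 * (-Real.sin x)) - (2 * Real.sin x ^ 1 * Real.cos x))) x :=
    ((hasDerivAt_id x).mul (((Real.hasDerivAt_cos x).pow 2).sub ((Real.hasDerivAt_sin x).pow 2)))
  have := (h1.sub h2).add h3
  refine this.congr_deriv ?_
  have pyth := Real.sin_sq_add_cos_sq x
  ring_nf
  nlinarith [pyth]

lemma sin_sub_mul_cos_pos {x : ℝ} (hx : 0 < x) (hx' : x < π) :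
    0 < Real.sin x - x * Real.cos x := by
  have key : StrictMonoOn (fun x => Real.sin x - x * Real.cos x) (Set.Icc 0 π) := by
    apply strictMonoOn_of_deriv_pos (convex_Icc 0 π)
    · exact (Real.continuous_sin.sub (continuous_id.mul Real.continuous_cos)).continuousOn
    · intro y hy
      rw [interior_Icc] at hy
      have h1 : HasDerivAt (fun x => Real.sin x - x * Real.cos x) (y * Real.sin y) y := by
        have := (Real.hasDerivAt_sin y).sub ((hasDerivAt_id y).mul (Real.hasDerivAt_cos y))
        refine this.congr_deriv ?_; simp only [id_eq]; ring
      rw [h1.deriv]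
      exact mul_pos hy.1 (Real.sin_pos_of_pos_of_lt_pi hy.1 hy.2)
  have := key (Set.left_mem_Icc.2 pi_pos.le) (Set.mem_Icc.2 ⟨hx.le, hx'.le⟩) hx
  simpa using this

lemma Tfun'_pos {x : ℝ} (hx : 0 < x) (hx' : x < π) : 0 < Tfun' x := by
  have key : StrictMonoOn Tfun' (Set.Icc 0 π) := by
    apply strictMonoOn_of_deriv_pos (convex_Icc 0 π)
    · exact (fun y _ => (hasDerivAt_Tfun' y).continuousAt.continuousWithinAt)
    · intro y hy
      rw [interior_Icc] at hy
      rw [(hasDerivAt_Tfun' y).deriv]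
      have hs := Real.sin_pos_of_pos_of_lt_pi hy.1 hy.2
      have := sin_sub_mul_cos_pos hy.1 hy.2
      positivity
  have := key (Set.left_mem_Icc.2 pi_pos.le) (Set.mem_Icc.2 ⟨hx.le, hx'.le⟩) hx
  have h0 : Tfun' 0 = 0 := by simp [Tfun']
  linarith [this, h0.symm.le]

lemma Tfun_pos {x : ℝ} (hx : 0 < x) (hx' : x < π) : 0 < Tfun x := by
  have key : StrictMonoOn Tfun (Set.Icc 0 π) := by
    apply strictMonoOn_of_deriv_pos (convex_Icc 0 π)
    · exact (fun y _ => (hasDerivAt_Tfun y).continuousAt.continuousWithinAt)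
    · intro y hy
      rw [interior_Icc] at hy
      rw [(hasDerivAt_Tfun y).deriv]
      exact Tfun'_pos hy.1 hy.2
  have := key (Set.left_mem_Icc.2 pi_pos.le) (Set.mem_Icc.2 ⟨hx.le, hx'.le⟩) hx
  have h0 : Tfun 0 = 0 := by simp [Tfun]
  linarith [this, h0.symm.le]

noncomputable def Xif (x : ℝ) : ℝ := (2 * x - Real.sin (2 * x)) / (2 * x ^ 2 * Real.sin x)

lemma hasDerivAt_Xif {x : ℝ} (hx : 0 < x) (hx' : x < π) :
    HasDerivAt Xif
      ((-4 * x * Real.cos x * Tfun x) / (2 * x ^ 2 * Real.sin x)^2) x := by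
  have hs := Real.sin_pos_of_pos_of_lt_pi hx hx'
  have hD : 2 * x ^ 2 * Real.sin x ≠ 0 := by positivity
  have hN : HasDerivAt (fun x : ℝ => 2 * x - Real.sin (2 * x))
      (2 - Real.cos (2*x) * 2) x := by
    have h2x : HasDerivAt (fun x : ℝ => 2 * x) 2 x := by simpa using (hasDerivAt_id x).const_mul 2
    exact (h2x.sub ((Real.hasDerivAt_sin (2*x)).comp x h2x))
  have hDd : HasDerivAt (fun x : ℝ => 2 * x ^ 2 * Real.sin x)
      ((2 * (2 * x ^ 1)) * Real.sin x + (2 * x ^ 2) * Real.cos x) x :=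
    (((hasDerivAt_pow 2 x).const_mul 2).mul (Real.hasDerivAt_sin x))
  have := hN.div hDd hD
  refine this.congr_deriv ?_
  rw [Real.cos_two_mul, Real.sin_two_mul]
  have h2 : (2 * x ^ 2 * Real.sin x)^2 ≠ 0 := pow_ne_zero 2 hD
  field_simp
  simp only [Tfun]
  ring

lemma Xif_continuousOn {s : Set ℝ} (hs : s ⊆ Set.Ioo 0 π) : ContinuousOn Xif s := by
  apply ContinuousOn.div
  · exact ((continuous_const.mul continuous_id).sub
      (Real.continuous_sin.comp (continuous_const.mul continuous_id))).continuousOn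
  · exact Continuous.continuousOn (by continuity)
  · intro y hy
    obtain ⟨h1, h2⟩ := hs hy
    have := Real.sin_pos_of_pos_of_lt_pi h1 h2
    positivity

lemma Xif_pi_div_two : Xif (π / 2) = 2 / π := by
  have hπ : (π : ℝ) ≠ 0 := pi_ne_zero
  simp only [Xif]
  rw [show 2 * (π/2) = π by ring, Real.sin_pi, Real.sin_pi_div_two]
  field_simp
  ring

lemma Xif_ge {ω : ℝ} (hω : 0 < ω) (hω' : ω < π) : Xif ω ≥ 2 / π := by
  rw [← Xif_pi_div_two]
  rcases le_or_gt ω (π/2) with h | h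
  · -- antitone on Ioc 0 (π/2)
    have anti : StrictAntiOn Xif (Set.Ioc 0 (π/2)) := by
      apply strictAntiOn_of_deriv_neg (convex_Ioc 0 (π/2))
      · apply Xif_continuousOn
        intro y hy
        exact ⟨hy.1, lt_of_le_of_lt hy.2 (by linarith [pi_pos])⟩
      · intro y hy
        rw [interior_Ioc] at hy
        have hyπ : y < π := by linarith [pi_pos, hy.2]
        rw [(hasDerivAt_Xif hy.1 hyπ).deriv]
        have hc : 0 < Real.cos y := Real.cos_pos_of_mem_Ioo ⟨by linarith [hy.1], hy.2⟩
        have hT := Tfun_pos hy.1 hyπ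
        have hs := Real.sin_pos_of_pos_of_lt_pi hy.1 hyπ
        have hy0 : 0 < y := hy.1
        have hden : (0:ℝ) < (2 * y ^ 2 * Real.sin y)^2 :=
          pow_pos (by positivity) 2
        have hnum : -4 * y * Real.cos y * Tfun y < 0 := by nlinarith [mul_pos (mul_pos hy.1 hc) hT]
        exact div_neg_of_neg_of_pos hnum hden
    rcases eq_or_lt_of_le h with heq | hlt
    · rw [heq]
    · exact le_of_lt (anti ⟨hω, h⟩ ⟨by linarith [pi_pos], le_refl _⟩ hlt)
  · -- monotone on Ico (π/2) π
    have mono : StrictMonoOn Xif (Set.Ico (π/2) π) := by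
      apply strictMonoOn_of_deriv_pos (convex_Ico (π/2) π)
      · apply Xif_continuousOn
        intro y hy
        exact ⟨lt_of_lt_of_le (by linarith [pi_pos]) hy.1, hy.2⟩
      · intro y hy
        rw [interior_Ico] at hy
        have hy0 : 0 < y := lt_trans (by linarith [pi_pos]) hy.1
        rw [(hasDerivAt_Xif hy0 hy.2).deriv]
        have hc : Real.cos y < 0 := Real.cos_neg_of_pi_div_two_lt_of_lt hy.1 (by linarith [hy.2, pi_pos])
        have hT := Tfun_pos hy0 hy.2
        have hs := Real.sin_pos_of_pos_of_lt_pi hy0 hy.2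
        have hden : (0:ℝ) < (2 * y ^ 2 * Real.sin y)^2 :=
          pow_pos (by positivity) 2
        have hnum : 0 < -4 * y * Real.cos y * Tfun y := by nlinarith [mul_pos (mul_pos hy0 (neg_pos.2 hc)) hT]
        exact div_pos hnum hden
    exact le_of_lt (mono ⟨le_refl _, by linarith [pi_pos]⟩ ⟨h.le, hω'⟩ h)

theorem Xi_ge (Ξ : ℝ → ℝ)
    (hΞ : ∀ ω, Ξ ω = (2 * ω - Real.sin (2 * ω)) / (2 * ω ^ 2 * Real.sin ω)) :
    (∀ ω, 0 < ω → ω < π → Ξ ω ≥ 2 / π) ∧ Ξ (π / 2) = 2 / π := by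
  have hfun : Ξ = Xif := funext hΞ
  subst hfun
  exact ⟨fun ω h1 h2 => Xif_ge h1 h2, Xif_pi_div_two⟩
end

section
/- The function K(ω) = sin²(ω) − sin(ω) − cos(ω)·(ω² − ω) is strictly positive for all ω with π/2 < ω < π. -/
open Real

theorem K_pos (ω : ℝ) (h1 : π / 2 < ω) (h2 : ω < π) :
    (Real.sin ω) ^ 2 - Real.sin ω - Real.cos ω * (ω ^ 2 - ω) > 0 := by
  have hπ := Real.pi_gt_three
  have hω0 : (0:ℝ) < ω := by linarith
  have hs : 0 < Real.sin ω := Real.sin_pos_of_pos_of_lt_pi hω0 h2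
  have hs1 : Real.sin ω ≤ 1 := Real.sin_le_one ω
  have hc : Real.cos ω < 0 := Real.cos_neg_of_pi_div_two_lt_of_lt h1 (by linarith)
  have hpy : Real.sin ω ^ 2 + Real.cos ω ^ 2 = 1 := Real.sin_sq_add_cos_sq ω
  obtain ⟨c, hcdef⟩ : ∃ c, c = -Real.cos ω := ⟨_, rfl⟩
  obtain ⟨s, hsdef⟩ : ∃ s, s = Real.sin ω := ⟨_, rfl⟩
  have hc0 : 0 < c := by rw [hcdef]; linarith
  have hs0 : 0 < s := by rw [hsdef]; exact hs
  have hs1' : s ≤ 1 := by rw [hsdef]; exact hs1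
  have hcs : s ^ 2 + c ^ 2 = 1 := by rw [hcdef, hsdef]; nlinarith
  have k1 : 1 - s ≤ c ^ 2 := by nlinarith
  have k2 : s * (1 - s) ≤ c * (s * c) := by nlinarith
  have k3 : s * c ≤ 1 / 2 := by nlinarith [sq_nonneg (s - c)]
  have k4 : (1:ℝ) / 2 < ω ^ 2 - ω := by nlinarith
  have k5 : c * (s * c) < c * (ω ^ 2 - ω) := by
    apply mul_lt_mul_of_pos_left _ hc0
    linarith
  have key : s ^ 2 - s + c * (ω ^ 2 - ω) > 0 := by nlinarith
  have : Real.cos ω * (ω ^ 2 - ω) = -(c * (ω ^ 2 - ω)) := by rw [hcdef]; ring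
  rw [← hsdef, this]
  linarith
end

section
/- For all r ∈ [−1, 1] and all ω ∈ [0, π), Φ(r, ω) := (ω/sin ω)²·(1 − r·cos ω) + r ≥ 1 (with the convention (ω/sin ω)² = 1 at ω = 0). -/
open Real

theorem Phi_ge_one (r ω : ℝ) (hr : r ∈ Set.Icc (-1 : ℝ) 1)
    (hω : ω ∈ Set.Ico 0 π) :
    (if ω = 0 then (1 : ℝ) else (ω / Real.sin ω) ^ 2) * (1 - r * Real.cos ω)
      + r ≥ 1 := by
  obtain ⟨hr1, hr2⟩ := hr
  obtain ⟨hω0, hωπ⟩ := hω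
  by_cases h0 : ω = 0
  · simp [h0]
  · rw [if_neg h0]
    have hωpos : 0 < ω := lt_of_le_of_ne hω0 (Ne.symm h0)
    have hs : 0 < Real.sin ω := Real.sin_pos_of_pos_of_lt_pi hωpos hωπ
    set c : ℝ := (ω / Real.sin ω) ^ 2 with hc
    have hc0 : 0 ≤ c := sq_nonneg _
    -- half-angle facts
    have hhalf_lt : ω / 2 < π / 2 := by linarith
    have hhalf_pos : 0 < ω / 2 := by linarith
    have hcos_half_pos : 0 < Real.cos (ω / 2) :=
      Real.cos_pos_of_mem_Ioo ⟨by linarith [Real.pi_pos], hhalf_lt⟩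
    have hcos_sq : Real.cos (ω / 2) ^ 2 = 1 / 2 + Real.cos ω / 2 := by
      have h2 : (2 : ℝ) * (ω / 2) = ω := by ring
      rw [Real.cos_sq, h2]
    have hsin_sq : Real.sin (ω / 2) ^ 2 = 1 / 2 - Real.cos ω / 2 := by
      have := Real.sin_sq_add_cos_sq (ω / 2)
      linarith
    have hcos_gt : -1 < Real.cos ω := by nlinarith [sq_nonneg (Real.cos (ω / 2)), hcos_half_pos]
    have hcos_le : Real.cos ω ≤ 1 := Real.cos_le_one ω
    have hsin_half_le : Real.sin (ω / 2) ≤ ω / 2 := Real.sin_le hhalf_pos.le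
    have hsin_half_nonneg : 0 ≤ Real.sin (ω / 2) :=
      Real.sin_nonneg_of_nonneg_of_le_pi hhalf_pos.le (by linarith [Real.pi_pos])
    have h1mc : 1 - Real.cos ω ≤ ω ^ 2 / 2 := by nlinarith
    have hsin_sq_full : Real.sin ω ^ 2 = (1 - Real.cos ω) * (1 + Real.cos ω) := by
      have := Real.sin_sq_add_cos_sq ω
      nlinarith
    -- key inequality: c * (1 + cos ω) ≥ 2
    have hkey : 2 ≤ c * (1 + Real.cos ω) := by
      rw [hc, div_pow]
      have hs2 : 0 < Real.sin ω ^ 2 := by positivity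
      rw [div_mul_eq_mul_div, le_div_iff₀ hs2]
      nlinarith
    have h1 : 0 ≤ (1 - r) * (c * (1 + Real.cos ω) - 2) :=
      mul_nonneg (by linarith) (by linarith)
    have h2 : 0 ≤ (1 + r) * (c * (1 - Real.cos ω)) :=
      mul_nonneg (by linarith) (mul_nonneg hc0 (by linarith))
    nlinarith [h1, h2]
end

section
/- For all ω with 0 < ω ≤ π/2, one has 1 − 1/sin(ω) + (ω·cos(ω)/sin²(ω))·(1 − ω) ≤ 0. -/
open Real

theorem G1_deriv_nonpos (ω : ℝ) (h1 : 0 < ω) (h2 : ω ≤ π / 2) :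
    1 - 1 / Real.sin ω + (ω * Real.cos ω / (Real.sin ω) ^ 2) * (1 - ω) ≤ 0 := by
  have hs : 0 < Real.sin ω :=
    Real.sin_pos_of_pos_of_lt_pi h1 (lt_of_le_of_lt h2 (by linarith [Real.pi_pos]))
  have hc : 0 ≤ Real.cos ω :=
    Real.cos_nonneg_of_mem_Icc ⟨by linarith [Real.pi_pos], h2⟩
  have hs1 : Real.sin ω ≤ 1 := Real.sin_le_one ω
  have hsw : Real.sin ω ≤ ω := Real.sin_le h1.le
  have hwc : ω * Real.cos ω ≤ Real.sin ω := by
    rcases lt_or_eq_of_le h2 with h2' | h2'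
    · have hcpos : 0 < Real.cos ω := Real.cos_pos_of_mem_Ioo
        ⟨by linarith [Real.pi_pos], h2'⟩
      have := Real.lt_tan h1 h2'
      rw [Real.tan_eq_sin_div_cos] at this
      calc ω * Real.cos ω ≤ (Real.sin ω / Real.cos ω) * Real.cos ω := by
            exact mul_le_mul_of_nonneg_right this.le hc
        _ = Real.sin ω := by field_simp
    · rw [h2', Real.cos_pi_div_two]; simp
  -- reduce to polynomial inequality
  have key : Real.sin ω ^ 2 - Real.sin ω + ω * Real.cos ω * (1 - ω) ≤ 0 := by
    rcases le_or_gt ω 1 with hω | hω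
    · have h3 : ω * Real.cos ω * (1 - ω) ≤ Real.sin ω * (1 - ω) :=
        mul_le_mul_of_nonneg_right hwc (by linarith)
      have h4 : Real.sin ω ^ 2 + Real.sin ω * (1 - ω) ≤ Real.sin ω := by
        nlinarith
      linarith
    · have h3 : ω * Real.cos ω * (1 - ω) ≤ 0 :=
        mul_nonpos_of_nonneg_of_nonpos (by positivity) (by linarith)
      nlinarith
  have hs2 : (0:ℝ) < Real.sin ω ^ 2 := by positivity
  rw [div_mul_eq_mul_div]
  have : 1 - 1 / Real.sin ω + ω * Real.cos ω * (1 - ω) / Real.sin ω ^ 2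
      = (Real.sin ω ^ 2 - Real.sin ω + ω * Real.cos ω * (1 - ω)) / Real.sin ω ^ 2 := by
    field_simp
  rw [this]
  exact div_nonpos_of_nonpos_of_nonneg key hs2.le
end

section
/- Let x, x' ∈ ℝⁿ and u, u' ∈ ℝ, and define d_K((x,u),(x',u')) = (√((|x|²+|x'|²)² + (2|u−u'|)²) − 2⟨x, x'⟩)^{1/2}. Then d_K((x,u),(x',u')) < 1 if and only if |x' − x| < 1 and 2|u' − u| < √(1 − |x'−x|²) · √(1 + |x'+x|²). -/
open scoped RealInnerProductSpace

lemma dK_key (a b p t : ℝ) (hab : |p| ≤ a * b) (ht : 0 ≤ t) (ha : 0 ≤ a) (hb : 0 ≤ b) :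
    Real.sqrt (Real.sqrt ((a ^ 2 + b ^ 2) ^ 2 + t ^ 2) - 2 * p) < 1 ↔
      a ^ 2 + b ^ 2 - 2 * p < 1 ∧
        t < Real.sqrt (1 - (a ^ 2 + b ^ 2 - 2 * p)) * Real.sqrt (1 + (a ^ 2 + b ^ 2 + 2 * p)) := by
  have hA : 2 * |p| ≤ a ^ 2 + b ^ 2 := by nlinarith [sq_nonneg (a - b)]
  have hp1 : 2 * p ≤ a ^ 2 + b ^ 2 := by nlinarith [le_abs_self p]
  have hp2 : -(a ^ 2 + b ^ 2) ≤ 2 * p := by nlinarith [neg_abs_le p]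
  rw [Real.sqrt_lt' one_pos, one_pow]
  constructor
  · intro h
    have h1 : 0 < 1 + 2 * p := by
      have := Real.sqrt_nonneg ((a ^ 2 + b ^ 2) ^ 2 + t ^ 2)
      linarith
    have h2 : (a ^ 2 + b ^ 2) ^ 2 + t ^ 2 < (1 + 2 * p) ^ 2 := by
      have := (Real.sqrt_lt' h1).mp (by linarith)
      linarith
    have h3 : a ^ 2 + b ^ 2 - 2 * p < 1 := by nlinarith [sq_nonneg t]
    refine ⟨h3, ?_⟩
    rw [← Real.sqrt_mul (by linarith)]
    rw [show t = Real.sqrt (t ^ 2) by rw [Real.sqrt_sq ht]]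
    apply Real.sqrt_lt_sqrt (sq_nonneg t)
    nlinarith
  · rintro ⟨h1, h2⟩
    rw [← Real.sqrt_mul (by linarith)] at h2
    have h3 : t ^ 2 < (1 - (a ^ 2 + b ^ 2 - 2 * p)) * (1 + (a ^ 2 + b ^ 2 + 2 * p)) :=
      (Real.lt_sqrt ht).mp h2
    have hA2 : 0 < 1 + 2 * p := by nlinarith [sq_nonneg t]
    have : Real.sqrt ((a ^ 2 + b ^ 2) ^ 2 + t ^ 2) < 1 + 2 * p := by
      rw [Real.sqrt_lt' hA2]
      nlinarith
    linarith

theorem dK_lt_one_iff (n : ℕ) (x x' : EuclideanSpace ℝ (Fin n)) (u u' : ℝ) :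
    Real.sqrt (Real.sqrt ((‖x‖ ^ 2 + ‖x'‖ ^ 2) ^ 2 + (2 * |u - u'|) ^ 2)
        - 2 * ⟪x, x'⟫) < 1 ↔
      ‖x' - x‖ < 1 ∧
        2 * |u' - u| < Real.sqrt (1 - ‖x' - x‖ ^ 2) * Real.sqrt (1 + ‖x' + x‖ ^ 2) := by
  have e1 : ‖x' - x‖ ^ 2 = ‖x‖ ^ 2 + ‖x'‖ ^ 2 - 2 * ⟪x, x'⟫ := by
    rw [norm_sub_sq_real, real_inner_comm]; ring
  have e2 : ‖x' + x‖ ^ 2 = ‖x‖ ^ 2 + ‖x'‖ ^ 2 + 2 * ⟪x, x'⟫ := by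
    rw [norm_add_sq_real, real_inner_comm]; ring
  have e3 : |u' - u| = |u - u'| := abs_sub_comm _ _
  have hn : ‖x' - x‖ < 1 ↔ ‖x' - x‖ ^ 2 < 1 :=
    (pow_lt_one_iff_of_nonneg (norm_nonneg _) two_ne_zero).symm
  rw [hn, e1, e2, e3]
  exact dK_key ‖x‖ ‖x'‖ ⟪x, x'⟫ (2 * |u - u'|) (abs_real_inner_le_norm x x')
    (by positivity) (norm_nonneg _) (norm_nonneg _)
end

section
/- There exists a constant c > 1 (independent of n and β) such that for every integer n ≥ 2 and every real β ≥ 1, the integral Y = ∫₀^∞ (1 + 2β·sinh²(λ))^{−n/2} dλ satisfies c⁻¹·n^{−1/2}·β^{−1/2} ≤ Y ≤ c·n^{−1/2}·β^{−1/2}. -/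
open Real MeasureTheory Set

lemma sinh_le_two_mul (x : ℝ) (h0 : 0 ≤ x) (h1 : x ≤ 1) : Real.sinh x ≤ 2 * x := by
  have he : Real.exp x ≤ (1 - x) * Real.exp 0 + x * Real.exp 1 := by
    have := convexOn_exp.2 (Set.mem_univ (0:ℝ)) (Set.mem_univ (1:ℝ))
      (by linarith : (0:ℝ) ≤ 1 - x) h0 (by ring)
    simpa [smul_eq_mul] using this
  have h2 : Real.exp 1 ≤ 3 := by
    have := Real.exp_one_lt_d9; linarith
  have h3 : 1 - x ≤ Real.exp (-x) := by
    have := Real.add_one_le_exp (-x); linarith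
  rw [Real.sinh_eq]
  rw [Real.exp_zero] at he
  nlinarith [Real.exp_pos x]

lemma Y_pointwise_upper (n : ℕ) (β lam : ℝ) (hn : 2 ≤ n) (hβ : 1 ≤ β) :
    (1 + 2 * β * Real.sinh lam ^ 2) ^ (-(n:ℝ) / 2) ≤ (1 + (n:ℝ) * β * lam ^ 2)⁻¹ := by
  have hn2 : (2:ℝ) ≤ (n:ℝ) := by exact_mod_cast hn
  have hβ0 : (0:ℝ) < β := by linarith
  have hbase : (0:ℝ) < 1 + 2 * β * Real.sinh lam ^ 2 := by positivity
  have hsq : lam ^ 2 ≤ Real.sinh lam ^ 2 := by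
    have h1 : |lam| ≤ Real.sinh |lam| := Real.self_le_sinh_iff.mpr (abs_nonneg lam)
    have h2 : Real.sinh |lam| = |Real.sinh lam| := (Real.abs_sinh lam).symm
    calc lam ^ 2 = |lam| ^ 2 := (sq_abs lam).symm
      _ ≤ |Real.sinh lam| ^ 2 := by
          apply pow_le_pow_left₀ (abs_nonneg lam); rw [← h2]; exact h1
      _ = Real.sinh lam ^ 2 := sq_abs _
  have hB : 1 + (n:ℝ) * β * lam ^ 2 ≤ (1 + 2 * β * Real.sinh lam ^ 2) ^ ((n:ℝ) / 2) := by
    have hbern := one_add_mul_self_le_rpow_one_add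
      (by nlinarith [sq_nonneg (Real.sinh lam)] : (-1:ℝ) ≤ 2 * β * Real.sinh lam ^ 2)
      (by linarith : (1:ℝ) ≤ (n:ℝ)/2)
    have hm : (n:ℝ) * β * lam ^ 2 ≤ (n:ℝ) * β * Real.sinh lam ^ 2 :=
      mul_le_mul_of_nonneg_left hsq (by positivity)
    calc 1 + (n:ℝ) * β * lam ^ 2 ≤ 1 + (n:ℝ) * β * Real.sinh lam ^ 2 := by linarith
      _ = 1 + (n:ℝ)/2 * (2 * β * Real.sinh lam ^ 2) := by ring
      _ ≤ _ := hbern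
  rw [neg_div, Real.rpow_neg hbase.le]
  exact inv_anti₀ (by positivity) hB

lemma Y_pointwise_lower (n : ℕ) (β lam : ℝ) (hn : 2 ≤ n) (hβ : 1 ≤ β)
    (hl0 : 0 < lam) (hll : lam ≤ 1) (hlt : lam ^ 2 ≤ ((n:ℝ) * β)⁻¹) :
    Real.exp (-4) ≤ (1 + 2 * β * Real.sinh lam ^ 2) ^ (-(n:ℝ) / 2) := by
  have hn2 : (2:ℝ) ≤ (n:ℝ) := by exact_mod_cast hn
  have hβ0 : (0:ℝ) < β := by linarith
  have hn0 : (0:ℝ) < (n:ℝ) := by linarith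
  have hbase : (0:ℝ) < 1 + 2 * β * Real.sinh lam ^ 2 := by positivity
  have hs2 : Real.sinh lam ^ 2 ≤ 4 * lam ^ 2 := by
    have h1 : Real.sinh lam ≤ 2 * lam := sinh_le_two_mul lam hl0.le hll
    have h2 : 0 ≤ Real.sinh lam := Real.sinh_nonneg_iff.mpr hl0.le
    nlinarith
  have hinv : ((n:ℝ) * β)⁻¹ ≤ ((n:ℝ) * β)⁻¹ := le_refl _
  have hx : 2 * β * Real.sinh lam ^ 2 ≤ 8 / (n:ℝ) := by
    have h3 : 2 * β * Real.sinh lam ^ 2 ≤ 8 * β * lam ^ 2 := by nlinarith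
    have h4 : 8 * β * lam ^ 2 ≤ 8 * β * ((n:ℝ)*β)⁻¹ := by nlinarith
    have h5 : 8 * β * ((n:ℝ)*β)⁻¹ = 8 / (n:ℝ) := by field_simp
    linarith
  have hlog : Real.log (1 + 2 * β * Real.sinh lam ^ 2) ≤ 8 / (n:ℝ) := by
    have := Real.log_le_sub_one_of_pos hbase
    linarith
  have hlog0 : 0 ≤ Real.log (1 + 2 * β * Real.sinh lam ^ 2) := by
    apply Real.log_nonneg; nlinarith [sq_nonneg (Real.sinh lam)]
  rw [Real.rpow_def_of_pos hbase]
  apply Real.exp_le_exp.mpr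
  have h6 : (n:ℝ)/2 * Real.log (1 + 2 * β * Real.sinh lam ^ 2) ≤ (n:ℝ)/2 * (8/(n:ℝ)) :=
    mul_le_mul_of_nonneg_left hlog (by linarith)
  have h4 : (n:ℝ)/2 * (8/(n:ℝ)) = 4 := by field_simp; ring
  nlinarith

theorem Y_estimate :
    ∃ c : ℝ, 1 < c ∧ ∀ n : ℕ, 2 ≤ n → ∀ β : ℝ, 1 ≤ β →
      c⁻¹ * (n : ℝ) ^ (-(1 : ℝ) / 2) * β ^ (-(1 : ℝ) / 2) ≤
        (∫ lam in Set.Ioi (0 : ℝ),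
          (1 + 2 * β * Real.sinh lam ^ 2) ^ (-(n : ℝ) / 2)) ∧
      (∫ lam in Set.Ioi (0 : ℝ),
          (1 + 2 * β * Real.sinh lam ^ 2) ^ (-(n : ℝ) / 2)) ≤
        c * (n : ℝ) ^ (-(1 : ℝ) / 2) * β ^ (-(1 : ℝ) / 2) := by
  have hexp4 : (5:ℝ) ≤ Real.exp 4 := by
    have := Real.add_one_le_exp (4:ℝ); linarith
  refine ⟨Real.exp 4, by linarith, ?_⟩
  intro n hn β hβ
  have hn2 : (2:ℝ) ≤ (n:ℝ) := by exact_mod_cast hn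
  have hβ0 : (0:ℝ) < β := by linarith
  have hnβ : (1:ℝ) ≤ (n:ℝ) * β := by nlinarith
  have hnβ0 : (0:ℝ) < (n:ℝ) * β := by linarith
  have hbase : ∀ lam : ℝ, (0:ℝ) < 1 + 2 * β * Real.sinh lam ^ 2 := fun lam => by positivity
  have hfpos : ∀ lam : ℝ, 0 < (1 + 2 * β * Real.sinh lam ^ 2) ^ (-(n:ℝ) / 2) :=
    fun lam => Real.rpow_pos_of_pos (hbase lam) _
  have hgpos : ∀ lam : ℝ, 0 < (1 + (n:ℝ) * β * lam ^ 2)⁻¹ := fun lam => by positivity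
  have key : ∀ lam : ℝ,
      (1 + 2 * β * Real.sinh lam ^ 2) ^ (-(n:ℝ) / 2) ≤ (1 + (n:ℝ) * β * lam ^ 2)⁻¹ :=
    fun lam => Y_pointwise_upper n β lam hn hβ
  have hgcont : Continuous fun lam : ℝ => (1 + (n:ℝ) * β * lam ^ 2)⁻¹ := by
    have h1 : Continuous fun lam : ℝ => 1 + (n:ℝ) * β * lam ^ 2 := by continuity
    exact h1.inv₀ fun x => by positivity
  have hg_int : Integrable fun lam : ℝ => (1 + (n:ℝ) * β * lam ^ 2)⁻¹ := by
    apply integrable_inv_one_add_sq.mono' hgcont.aestronglyMeasurable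
    filter_upwards with x
    rw [Real.norm_eq_abs, abs_of_nonneg (hgpos x).le]
    apply inv_anti₀ (by positivity)
    nlinarith [sq_nonneg x]
  have hfcont : Continuous fun lam : ℝ => (1 + 2 * β * Real.sinh lam ^ 2) ^ (-(n:ℝ) / 2) := by
    apply Continuous.rpow_const (by continuity)
    intro x; exact Or.inl (hbase x).ne'
  have hf_int : Integrable fun lam : ℝ => (1 + 2 * β * Real.sinh lam ^ 2) ^ (-(n:ℝ) / 2) := by
    apply hg_int.mono' hfcont.aestronglyMeasurable
    filter_upwards with x
    rw [Real.norm_eq_abs, abs_of_nonneg (hfpos x).le]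
    exact key x
  constructor
  · -- lower bound
    set t : ℝ := ((n:ℝ) * β) ^ (-(1:ℝ)/2) with ht_def
    have ht0 : 0 < t := Real.rpow_pos_of_pos hnβ0 _
    have ht1 : t ≤ 1 := Real.rpow_le_one_of_one_le_of_nonpos hnβ (by norm_num)
    have hts : t = (Real.sqrt ((n:ℝ)*β))⁻¹ := by
      rw [ht_def, Real.sqrt_eq_rpow, ← Real.rpow_neg hnβ0.le, neg_div]
    have htsq : t ^ 2 = ((n:ℝ) * β)⁻¹ := by
      rw [hts, inv_pow, Real.sq_sqrt hnβ0.le]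
    have hpt : ∀ lam ∈ Ioc (0:ℝ) t,
        Real.exp (-4) ≤ (1 + 2 * β * Real.sinh lam ^ 2) ^ (-(n:ℝ) / 2) := by
      intro lam hlam
      obtain ⟨hl0, hlt⟩ := hlam
      refine Y_pointwise_lower n β lam hn hβ hl0 (hlt.trans ht1) ?_
      rw [← htsq]
      nlinarith
    have step1 : Real.exp (-4) * t ≤
        ∫ lam in Ioc (0:ℝ) t, (1 + 2 * β * Real.sinh lam ^ 2) ^ (-(n:ℝ) / 2) := by
      have hc : ∫ _lam in Ioc (0:ℝ) t, Real.exp (-4) = Real.exp (-4) * t := by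
        rw [setIntegral_const, Real.volume_real_Ioc_of_le (by linarith),
          smul_eq_mul]
        ring
      rw [← hc]
      exact setIntegral_mono_on ((integrableOn_const_iff).mpr (Or.inr (by
        rw [Real.volume_Ioc]; exact ENNReal.ofReal_lt_top))) hf_int.integrableOn
        measurableSet_Ioc hpt
    have step2 : (∫ lam in Ioc (0:ℝ) t, (1 + 2 * β * Real.sinh lam ^ 2) ^ (-(n:ℝ) / 2)) ≤
        ∫ lam in Ioi (0:ℝ), (1 + 2 * β * Real.sinh lam ^ 2) ^ (-(n:ℝ) / 2) :=
      setIntegral_mono_set hf_int.integrableOn (ae_of_all _ fun x => (hfpos x).le)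
        (HasSubset.Subset.eventuallyLE Ioc_subset_Ioi_self)
    have hsplit : (Real.exp 4)⁻¹ * (n:ℝ) ^ (-(1:ℝ)/2) * β ^ (-(1:ℝ)/2) = Real.exp (-4) * t := by
      rw [ht_def, Real.mul_rpow (by positivity) (by positivity), Real.exp_neg]; ring
    rw [hsplit]
    exact le_trans step1 step2
  · -- upper bound
    have hIg : (∫ lam in Ioi (0:ℝ), (1 + (n:ℝ) * β * lam ^ 2)⁻¹)
        = π/2 * (Real.sqrt ((n:ℝ)*β))⁻¹ := by
      set s : ℝ := Real.sqrt ((n:ℝ)*β) with hs_def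
      have hs0 : 0 < s := Real.sqrt_pos.mpr hnβ0
      have hss : s ^ 2 = (n:ℝ)*β := Real.sq_sqrt hnβ0.le
      have hrw : ∀ lam : ℝ, (1 + (n:ℝ) * β * lam ^ 2)⁻¹ = (fun x => (1 + x^2)⁻¹) (s * lam) := by
        intro lam; simp only [mul_pow, hss]
      calc (∫ lam in Ioi (0:ℝ), (1 + (n:ℝ) * β * lam ^ 2)⁻¹)
          = ∫ lam in Ioi (0:ℝ), (fun x => (1 + x^2)⁻¹) (s * lam) := by simp_rw [hrw]
        _ = s⁻¹ • ∫ x in Ioi (s * 0), (1 + x^2)⁻¹ :=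
            integral_comp_mul_left_Ioi (fun x => (1 + x^2)⁻¹) 0 hs0
        _ = π/2 * s⁻¹ := by
            rw [mul_zero, integral_Ioi_inv_one_add_sq]
            simp [Real.arctan_zero, smul_eq_mul]
            ring
    have hmono : (∫ lam in Ioi (0:ℝ), (1 + 2 * β * Real.sinh lam ^ 2) ^ (-(n:ℝ) / 2)) ≤
        ∫ lam in Ioi (0:ℝ), (1 + (n:ℝ) * β * lam ^ 2)⁻¹ :=
      setIntegral_mono hf_int.integrableOn hg_int.integrableOn key
    have hsqrtinv : (Real.sqrt ((n:ℝ)*β))⁻¹ = (n:ℝ) ^ (-(1:ℝ)/2) * β ^ (-(1:ℝ)/2) := by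
      rw [Real.sqrt_eq_rpow, ← Real.rpow_neg hnβ0.le,
        Real.mul_rpow (by positivity) (by positivity)]
      norm_num
    have hπ : π/2 ≤ Real.exp 4 := by
      have := Real.pi_le_four; linarith
    calc (∫ lam in Ioi (0:ℝ), (1 + 2 * β * Real.sinh lam ^ 2) ^ (-(n:ℝ) / 2))
        ≤ π/2 * (Real.sqrt ((n:ℝ)*β))⁻¹ := by rw [← hIg]; exact hmono
      _ = π/2 * ((n:ℝ) ^ (-(1:ℝ)/2) * β ^ (-(1:ℝ)/2)) := by rw [hsqrtinv]
      _ ≤ Real.exp 4 * ((n:ℝ) ^ (-(1:ℝ)/2) * β ^ (-(1:ℝ)/2)) :=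
          mul_le_mul_of_nonneg_right hπ (by positivity)
      _ = Real.exp 4 * (n:ℝ) ^ (-(1:ℝ)/2) * β ^ (-(1:ℝ)/2) := by ring
end

section
/- For every real β₁ and every β₂ with 0 ≤ β₂ ≤ π/2 such that β₁ + i·β₂ ≠ 0, the real part of sinh(β₁ + i β₂)/(β₁ + i β₂) is strictly positive; explicitly, Re(sinh(β₁+iβ₂)/(β₁+iβ₂)) = (β₁·sinh(β₁)·cos(β₂) + β₂·sin(β₂)·cosh(β₁))/(β₁² + β₂²) > 0 whenever (β₁, β₂) ≠ (0,0). -/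
open Complex Real

theorem re_sinh_div_pos (β₁ β₂ : ℝ) (h0 : 0 ≤ β₂) (h2 : β₂ ≤ Real.pi / 2)
    (hne : (β₁, β₂) ≠ (0, 0)) :
    (Complex.sinh (β₁ + β₂ * Complex.I) / (β₁ + β₂ * Complex.I)).re =
      (β₁ * Real.sinh β₁ * Real.cos β₂ + β₂ * Real.sin β₂ * Real.cosh β₁) /
        (β₁ ^ 2 + β₂ ^ 2) ∧
    0 < (Complex.sinh (β₁ + β₂ * Complex.I) / (β₁ + β₂ * Complex.I)).re := by
  have hsq : 0 < β₁ ^ 2 + β₂ ^ 2 := by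
    rcases eq_or_ne β₂ 0 with hb2 | hb2
    · subst hb2
      have : β₁ ≠ 0 := fun h => hne (by simp [h])
      positivity
    · positivity
  have heq : (Complex.sinh (β₁ + β₂ * Complex.I) / (β₁ + β₂ * Complex.I)).re =
      (β₁ * Real.sinh β₁ * Real.cos β₂ + β₂ * Real.sin β₂ * Real.cosh β₁) /
        (β₁ ^ 2 + β₂ ^ 2) := by
    rw [Complex.div_re, Complex.sinh_add, Complex.sinh_mul_I, Complex.cosh_mul_I]
    simp [Complex.normSq_apply, Complex.sinh_ofReal_re, Complex.cosh_ofReal_re,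
      Complex.cos_ofReal_re, Complex.sin_ofReal_re, div_eq_mul_inv]
    ring
  refine ⟨heq, heq ▸ ?_⟩
  apply div_pos _ hsq
  have hcos : 0 ≤ Real.cos β₂ := Real.cos_nonneg_of_mem_Icc ⟨by linarith [Real.pi_pos], h2⟩
  have hcosh : 0 < Real.cosh β₁ := Real.cosh_pos β₁
  rcases eq_or_ne β₂ 0 with hb2 | hb2
  · subst hb2
    have hb1 : β₁ ≠ 0 := fun h => hne (by simp [h])
    have : 0 < β₁ * Real.sinh β₁ := by
      rcases hb1.lt_or_gt with h | h
      · exact mul_pos_of_neg_of_neg h (Real.sinh_neg_iff.2 h)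
      · exact mul_pos h (Real.sinh_pos_iff.2 h)
    simpa using this
  · have hb2' : 0 < β₂ := lt_of_le_of_ne h0 (Ne.symm hb2)
    have hsin : 0 < Real.sin β₂ :=
      Real.sin_pos_of_pos_of_lt_pi hb2' (lt_of_le_of_lt h2 (by linarith [Real.pi_pos]))
    have h1 : 0 ≤ β₁ * Real.sinh β₁ * Real.cos β₂ := by
      apply mul_nonneg _ hcos
      rcases lt_trichotomy β₁ 0 with h | h | h
      · exact le_of_lt (mul_pos_of_neg_of_neg h (Real.sinh_neg_iff.2 h))
      · simp [h]
      · exact le_of_lt (mul_pos h (Real.sinh_pos_iff.2 h))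
    have h2' : 0 < β₂ * Real.sin β₂ * Real.cosh β₁ :=
      mul_pos (mul_pos hb2' hsin) hcosh
    linarith
end

section
/- Let x, z ∈ ℝⁿ with x ≠ 0 and let 0 < ω < π. If (ω/sin ω)²·(|z|² + 2⟨x + z, x⟩·(1 − cos ω)) < 1, where x' = x + z, then |z| < 1. -/
open Real
open scoped RealInnerProductSpace

set_option maxHeartbeats 1000000 in
theorem ball_cc_radius (n : ℕ) (x z : EuclideanSpace ℝ (Fin n)) (hx : x ≠ 0)
    (ω : ℝ) (h1 : 0 < ω) (h2 : ω < π)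
    (h : (ω / Real.sin ω) ^ 2 *
        (‖z‖ ^ 2 + 2 * ⟪x + z, x⟫ * (1 - Real.cos ω)) < 1) :
    ‖z‖ < 1 := by
  have hπ := Real.pi_pos
  have hs : 0 < Real.sin ω := Real.sin_pos_of_pos_of_lt_pi h1 h2
  set u := Real.sin (ω/2) with hu
  set v := Real.cos (ω/2) with hv
  have hsu : 0 < u := Real.sin_pos_of_pos_of_lt_pi (by linarith) (by linarith)
  have hcv : 0 < v := Real.cos_pos_of_mem_Ioo ⟨by linarith, by linarith⟩
  have huv : u^2 + v^2 = 1 := Real.sin_sq_add_cos_sq _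
  have hsin2 : Real.sin ω = 2 * u * v := by
    rw [hu, hv, ← Real.sin_two_mul]; ring_nf
  have hcos2 : 1 - Real.cos ω = 2 * u^2 := by
    have h' : Real.cos ω = v^2 - u^2 := by
      rw [hu, hv, ← Real.cos_two_mul']; ring_nf
    rw [h']; linarith
  have hule : u ≤ ω/2 := Real.sin_le (by linarith)
  set a := ‖x‖ with hadef
  set b := ‖z‖ with hbdef
  have ha : 0 < a := norm_pos_iff.mpr hx
  have hb : 0 ≤ b := norm_nonneg z
  have hip : a^2 - b*a ≤ ⟪x + z, x⟫ := by
    have e1 : ⟪x + z, x⟫ = ‖x‖^2 + ⟪z, x⟫ := by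
      rw [inner_add_left, real_inner_self_eq_norm_sq]
    have e2 := abs_real_inner_le_norm z x
    have e3 := neg_abs_le ⟪z, x⟫
    rw [e1]; nlinarith
  set p := (⟪x + z, x⟫ : ℝ) with hpdef
  clear_value u v a b p
  clear hpdef hadef hbdef hx x z
  have hwv : 1 ≤ (ω / Real.sin ω) * v := by
    rw [hsin2]
    have e : ω / (2*u*v) * v = ω / (2*u) := by
      field_simp
    rw [e, le_div_iff₀ (by linarith)]
    linarith
  have hX : b^2 * v^2 ≤ b^2 + 2*(a^2 - b*a)*(1 - Real.cos ω) := by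
    rw [hcos2]; nlinarith [sq_nonneg ((b - 2*a)*u)]
  have hpos : (0:ℝ) < (ω / Real.sin ω)^2 := by positivity
  have hcc : 0 < 1 - Real.cos ω := by nlinarith
  have hkey : b^2 ≤ (ω / Real.sin ω)^2 * (b^2 + 2*p*(1 - Real.cos ω)) := by
    calc b^2 = 1^2 * b^2 := by ring
    _ ≤ ((ω/Real.sin ω)*v)^2 * b^2 := by
        have hw2 : (1:ℝ) ≤ ((ω/Real.sin ω)*v)^2 := by nlinarith
        nlinarith [mul_le_mul_of_nonneg_right hw2 (sq_nonneg b)]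
    _ = (ω/Real.sin ω)^2 * (b^2 * v^2) := by ring
    _ ≤ (ω/Real.sin ω)^2 * (b^2 + 2*(a^2-b*a)*(1-Real.cos ω)) :=
        mul_le_mul_of_nonneg_left hX hpos.le
    _ ≤ _ := by
        apply mul_le_mul_of_nonneg_left _ hpos.le
        nlinarith [mul_le_mul_of_nonneg_right hip hcc.le]
  have hb2 : b^2 < 1 := hkey.trans_lt h
  nlinarith [hb2, hb]
end
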